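/- (Deterministic log-transform lemma behind the Krylov–Bogolyubov bound.) Let y : [0,∞) → [0,∞) be differentiable and suppose y'(t) + β y(t) ≤ C y(t) ξ(t) + C η(t) for all t, where β, C > 0 and ξ, η ≥ 0 are locally integrable. Fix M ≥ 2 and set ζ(t) = log(max(y(t), M/2)). Then for all t where the derivatives exist, ζ'(t) + β·1_{{y(t) ≥ M/2}} ≤ C ξ(t) + (2C/M) η(t); consequently, for T > 0, β ∫₀^T 1_{{y(t) ≥ M/2}} dt ≤ ζ(0) - ζ(T) + C ∫₀^T ξ(t) dt + (2C/M) ∫₀^T η(t) dt. -/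

import Mathlib

open Real MeasureTheory

open Set Filter Topology Asymptotics in
private lemma logmax_sub_le {c a b : ℝ} (hc : 0 < c) (h : b ≤ a) :
    Real.log (max a c) - Real.log (max b c) ≤ (a - b) / c := by
  have hbpos : 0 < max b c := lt_of_lt_of_le hc (le_max_right _ _)
  have hapos : 0 < max a c := lt_of_lt_of_le hc (le_max_right _ _)
  have hmle : max a c - max b c ≤ a - b := by
    rcases le_total b c with hb | hb
    · rcases le_total a c with ha | ha
      · simp [max_eq_right ha, max_eq_right hb]; linarith
      · rw [max_eq_left ha, max_eq_right hb]; linarith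
    · rw [max_eq_left (hb.trans h), max_eq_left hb]
  have hnn : 0 ≤ max a c - max b c := by
    have : max b c ≤ max a c := max_le_max h le_rfl
    linarith
  have h1 : Real.log (max a c) - Real.log (max b c) ≤ max a c / max b c - 1 := by
    rw [← Real.log_div (ne_of_gt hapos) (ne_of_gt hbpos)]
    exact Real.log_le_sub_one_of_pos (by positivity)
  have h2 : max a c / max b c - 1 = (max a c - max b c) / max b c := by field_simp
  have h3 : (max a c - max b c) / max b c ≤ (max a c - max b c) / c := by
    gcongr
    exact le_max_right _ _
  have h4 : (max a c - max b c) / c ≤ (a - b) / c := by gcongr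
  linarith

private lemma abs_logmax_sub_le {c : ℝ} (hc : 0 < c) (a b : ℝ) :
    |Real.log (max a c) - Real.log (max b c)| ≤ |a - b| / c := by
  rcases le_total b a with h | h
  · rw [abs_of_nonneg (by linarith : (0:ℝ) ≤ a - b), abs_of_nonneg]
    · exact logmax_sub_le hc h
    · have := Real.log_le_log (lt_of_lt_of_le hc (le_max_right b c)) (max_le_max h (le_refl c))
      linarith
  · rw [abs_sub_comm, abs_sub_comm a b, abs_of_nonneg (by linarith : (0:ℝ) ≤ b - a),
      abs_of_nonneg]
    · exact logmax_sub_le hc h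
    · have := Real.log_le_log (lt_of_lt_of_le hc (le_max_right a c)) (max_le_max h (le_refl c))
      linarith

open Set Filter Topology Asymptotics in
/-- Deterministic log-transform lemma behind the Krylov–Bogolyubov bound.
If `y ≥ 0` satisfies `y' + βy ≤ C y ξ + C η` with `β, C > 0`, `ξ, η ≥ 0`
locally integrable, and `M ≥ 2`, then `ζ(t) = log(max(y(t), M/2))` satisfies
(wherever it is differentiable) `ζ' + β·1_{y ≥ M/2} ≤ Cξ + (2C/M)η`, and
`β ∫₀^T 1_{y(t) ≥ M/2} dt ≤ ζ(0) - ζ(T) + C ∫₀^T ξ + (2C/M) ∫₀^T η`. -/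
theorem stmt12 (y y' ξ η : ℝ → ℝ) (β C M : ℝ)
    (hβ : 0 < β) (hC : 0 < C) (hM : 2 ≤ M)
    (hy : ∀ t, HasDerivAt y (y' t) t) (hynn : ∀ t, 0 ≤ y t)
    (hξnn : ∀ t, 0 ≤ ξ t) (hηnn : ∀ t, 0 ≤ η t)
    (hξloc : LocallyIntegrable ξ) (hηloc : LocallyIntegrable η)
    (hineq : ∀ t, y' t + β * y t ≤ C * y t * ξ t + C * η t) :
    (∀ t z, HasDerivAt (fun s => Real.log (max (y s) (M / 2))) z t →
      z + β * Set.indicator {s : ℝ | M / 2 ≤ y s} (fun _ => (1:ℝ)) t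
        ≤ C * ξ t + (2 * C / M) * η t) ∧
    (∀ T : ℝ, 0 < T →
      β * ∫ t in (0:ℝ)..T, Set.indicator {s : ℝ | M / 2 ≤ y s} (fun _ => (1:ℝ)) t
        ≤ Real.log (max (y 0) (M / 2)) - Real.log (max (y T) (M / 2))
            + C * (∫ t in (0:ℝ)..T, ξ t) + (2 * C / M) * ∫ t in (0:ℝ)..T, η t) := by
  have hM0 : (0:ℝ) < M := by linarith
  have hMh : (0:ℝ) < M / 2 := by linarith
  have hcoef : (0:ℝ) < 2 * C / M := div_pos (by linarith) (by linarith)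
  have hcoef2 : (0:ℝ) < 2 / M := div_pos two_pos (by linarith)
  have ycont : Continuous y := continuous_iff_continuousAt.2 fun t => (hy t).continuousAt
  have hmaxpos : ∀ s, 0 < max (y s) (M / 2) :=
    fun s => lt_of_lt_of_le hMh (le_max_right _ _)
  set ζ : ℝ → ℝ := fun s => Real.log (max (y s) (M / 2)) with hζdef
  -- derivative of ζ in the various regimes
  have hgt : ∀ t, M / 2 < y t → HasDerivAt ζ (y' t / y t) t := by
    intro t ht
    have hyt : y t ≠ 0 := ne_of_gt (lt_trans hMh ht)
    have hlog : HasDerivAt (fun s => Real.log (y s)) (y' t / y t) t := (hy t).log hyt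
    apply hlog.congr_of_eventuallyEq
    have hev : ∀ᶠ s in 𝓝 t, M / 2 < y s :=
      ContinuousAt.eventually_lt continuousAt_const ycont.continuousAt ht
    filter_upwards [hev] with s hs
    rw [hζdef]
    simp only []
    rw [max_eq_left hs.le]
  have hlt : ∀ t, y t < M / 2 → HasDerivAt ζ 0 t := by
    intro t ht
    apply (hasDerivAt_const t (Real.log (M / 2))).congr_of_eventuallyEq
    have hev : ∀ᶠ s in 𝓝 t, y s < M / 2 :=
      ContinuousAt.eventually_lt ycont.continuousAt continuousAt_const ht
    filter_upwards [hev] with s hs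
    rw [hζdef]
    simp only []
    rw [max_eq_right hs.le]
  have hmid0 : ∀ t, y t = M / 2 → y' t = 0 → HasDerivAt ζ 0 t := by
    intro t ht ht'
    rw [hasDerivAt_iff_isLittleO]
    have h1 : (fun s => y s - y t) =o[𝓝 t] fun s => s - t := by
      have h := hy t
      rw [ht'] at h
      simpa using hasDerivAt_iff_isLittleO.1 h
    have h2 : (fun s => ζ s - ζ t) =O[𝓝 t] fun s => y s - y t := by
      rw [Asymptotics.isBigO_iff]
      refine ⟨1 / (M / 2), Eventually.of_forall fun s => ?_⟩
      rw [Real.norm_eq_abs, Real.norm_eq_abs]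
      have := abs_logmax_sub_le hMh (y s) (y t)
      rw [one_div, ← div_eq_inv_mul]
      exact this
    simpa using h2.trans_isLittleO h1
  have hmidp : ∀ t, y t = M / 2 → 0 < y' t →
      HasDerivWithinAt ζ (y' t / y t) (Set.Ioi t) t := by
    intro t ht ht'
    have hyt : y t ≠ 0 := by rw [ht]; exact ne_of_gt hMh
    have hlog : HasDerivAt (fun s => Real.log (y s)) (y' t / y t) t := (hy t).log hyt
    apply hlog.hasDerivWithinAt.congr_of_eventuallyEq
    · have hsl : Tendsto (slope y t) (𝓝[>] t) (𝓝 (y' t)) :=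
        (hasDerivAt_iff_tendsto_slope.1 (hy t)).mono_left
          (nhdsWithin_mono _ fun s hs => ne_of_gt hs)
      have hev : ∀ᶠ s in 𝓝[>] t, 0 < slope y t s := hsl.eventually (eventually_gt_nhds ht')
      filter_upwards [hev, self_mem_nhdsWithin] with s hsp hst
      have : 0 < y s - y t := by
        have h := mul_pos hsp (sub_pos.2 (hst : t < s))
        rwa [slope_def_field, div_mul_cancel₀] at h
        exact ne_of_gt (sub_pos.2 (hst : t < s))
      rw [hζdef]
      simp only []
      rw [max_eq_left (by rw [← ht]; linarith)]
    · rw [hζdef]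
      simp only []
      rw [ht, max_self]
  have hmidn : ∀ t, y t = M / 2 → y' t < 0 →
      HasDerivWithinAt ζ 0 (Set.Ioi t) t := by
    intro t ht ht'
    apply (hasDerivWithinAt_const t _ (Real.log (M / 2))).congr_of_eventuallyEq
    · have hsl : Tendsto (slope y t) (𝓝[>] t) (𝓝 (y' t)) :=
        (hasDerivAt_iff_tendsto_slope.1 (hy t)).mono_left
          (nhdsWithin_mono _ fun s hs => ne_of_gt hs)
      have hev : ∀ᶠ s in 𝓝[>] t, slope y t s < 0 := hsl.eventually (eventually_lt_nhds ht')
      filter_upwards [hev, self_mem_nhdsWithin] with s hsp hst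
      have : y s - y t < 0 := by
        have h := mul_neg_of_neg_of_pos hsp (sub_pos.2 (hst : t < s))
        rwa [slope_def_field, div_mul_cancel₀] at h
        exact ne_of_gt (sub_pos.2 (hst : t < s))
      rw [hζdef]
      simp only []
      rw [max_eq_right (by rw [← ht]; linarith)]
    · rw [hζdef]
      simp only []
      rw [ht, max_self]
  -- pointwise inequalities
  have boundgt : ∀ t, M / 2 ≤ y t → y' t / y t + β ≤ C * ξ t + 2 * C / M * η t := by
    intro t hyt
    have hypos : 0 < y t := lt_of_lt_of_le hMh hyt
    have h1 : y' t / y t + β = (y' t + β * y t) / y t := by field_simp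
    have h2 : (y' t + β * y t) / y t ≤ (C * y t * ξ t + C * η t) / y t :=
      (div_le_div_iff_of_pos_right hypos).2 (hineq t)
    have h3 : (C * y t * ξ t + C * η t) / y t = C * ξ t + C * η t / y t := by
      field_simp
    have h4 : C * η t / y t ≤ 2 * C / M * η t := by
      rw [div_le_iff₀ hypos]
      have h5 := mul_le_mul_of_nonneg_left hyt (mul_nonneg hcoef.le (hηnn t))
      have h6 : 2 * C / M * η t * (M / 2) = C * η t := by field_simp
      linarith
    linarith
  have hmid : ∀ t, y t = M / 2 → 2 / M * y' t + β ≤ C * ξ t + 2 * C / M * η t := by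
    intro t hyt
    have h := hineq t
    rw [hyt] at h
    have h5 := mul_le_mul_of_nonneg_left h hcoef2.le
    have e1 : 2 / M * (y' t + β * (M / 2)) = 2 / M * y' t + β := by field_simp
    have e2 : 2 / M * (C * (M / 2) * ξ t + C * η t) = C * ξ t + 2 * C / M * η t := by
      field_simp
    linarith
  constructor
  · -- part 1
    intro t z hz
    rcases lt_trichotomy (y t) (M / 2) with h | h | h
    · have hz0 : z = 0 := hz.unique (hlt t h)
      rw [Set.indicator_of_notMem (by simp only [Set.mem_setOf_eq, not_le]; exact h), hz0]
      have : (0:ℝ) ≤ C * ξ t := mul_nonneg hC.le (hξnn t)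
      have : (0:ℝ) ≤ 2 * C / M * η t := mul_nonneg hcoef.le (hηnn t)
      simp only [mul_zero, add_zero]
      linarith
    · have hmin : IsLocalMin ζ t := by
        apply Filter.Eventually.of_forall
        intro s
        show ζ t ≤ ζ s
        have hζt : ζ t = Real.log (M / 2) := by
          rw [hζdef]; simp only []; rw [h, max_self]
        rw [hζt]
        exact Real.log_le_log hMh (le_max_right _ _)
      have hz0 : z = 0 := hmin.hasDerivAt_eq_zero hz
      have hy'0 : y' t = 0 := by
        have hexp : HasDerivAt (fun s => Real.exp (ζ s)) (Real.exp (ζ t) * z) t := hz.exp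
        have heq : (fun s => Real.exp (ζ s)) = fun s => max (y s) (M / 2) :=
          funext fun s => Real.exp_log (hmaxpos s)
        rw [heq, hz0, mul_zero] at hexp
        have hmax : IsLocalMax (fun s => y s - max (y s) (M / 2)) t := by
          apply Filter.Eventually.of_forall
          intro s
          show y s - max (y s) (M / 2) ≤ y t - max (y t) (M / 2)
          have h1 : y s ≤ max (y s) (M / 2) := le_max_left _ _
          have h2 : max (y t) (M / 2) = y t := by rw [h, max_self]
          linarith
        have h0 := hmax.hasDerivAt_eq_zero ((hy t).sub hexp)
        linarith [h0]
      have hb := hmid t h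
      rw [hy'0, mul_zero, zero_add] at hb
      rw [Set.indicator_of_mem (show t ∈ {s : ℝ | M / 2 ≤ y s} from le_of_eq h.symm), hz0]
      linarith
    · have hz' : y' t / y t = z := (hgt t h).unique hz
      rw [Set.indicator_of_mem (show t ∈ {s : ℝ | M / 2 ≤ y s} from le_of_lt h), mul_one,
        ← hz']
      exact boundgt t (le_of_lt h)
  · -- part 2
    intro T hT
    set A : Set ℝ := {s : ℝ | M / 2 ≤ y s} with hA
    have hAmeas : MeasurableSet A := (isClosed_le continuous_const ycont).measurableSet
    set S : Set ℝ := {s : ℝ | y s = M / 2 ∧ y' s ≠ 0} with hSdef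
    have hScount : S.Countable := by
      rw [← Set.countable_coe_iff]
      have hdisc : DiscreteTopology S := by
        rw [discreteTopology_subtype_iff]
        intro x hx
        rw [inf_principal_eq_bot]
        have h1 : ∀ᶠ z in 𝓝[≠] x, y z ≠ y x := (hy x).eventually_ne hx.2
        filter_upwards [h1] with z hz
        intro hzS
        exact hz (by rw [hzS.1, hx.1])
      exact TopologicalSpace.separableSpace_iff_countable.mp inferInstance
    have hSmeas : MeasurableSet S := hScount.measurableSet
    have hS0 : volume S = 0 := hScount.measure_zero _
    set g' : ℝ → ℝ :=
      fun s => if M / 2 < y s ∨ (y s = M / 2 ∧ 0 < y' s) then y' s / y s else 0 with hg'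
    set φ : ℝ → ℝ :=
      fun s => C * ξ s + 2 * C / M * η s
        - β * Set.indicator (A \ S) (fun _ => (1:ℝ)) s with hφ
    have hcont : ContinuousOn ζ (Set.Icc 0 T) := by
      exact ((ycont.max continuous_const).log fun s => ne_of_gt (hmaxpos s)).continuousOn
    have hderiv : ∀ x ∈ Set.Ioo (0:ℝ) T, HasDerivWithinAt ζ (g' x) (Set.Ioi x) x := by
      intro x _
      rw [hg']
      simp only []
      rcases lt_trichotomy (y x) (M / 2) with h | h | h
      · rw [if_neg (by push_neg; exact ⟨le_of_lt h, fun he => absurd he (ne_of_lt h)⟩)]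
        exact (hlt x h).hasDerivWithinAt
      · rcases lt_trichotomy (y' x) 0 with h' | h' | h'
        · rw [if_neg (by push_neg; exact ⟨h.le, fun _ => le_of_lt h'⟩)]
          exact hmidn x h h'
        · rw [if_neg (by push_neg; exact ⟨h.le, fun _ => le_of_eq h'⟩)]
          exact (hmid0 x h h').hasDerivWithinAt
        · rw [if_pos (Or.inr ⟨h, h'⟩)]
          exact hmidp x h h'
      · rw [if_pos (Or.inl h)]
        exact (hgt x h).hasDerivWithinAt
    have hξInt : IntegrableOn ξ (Set.Icc 0 T) := hξloc.integrableOn_isCompact isCompact_Icc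
    have hηInt : IntegrableOn η (Set.Icc 0 T) := hηloc.integrableOn_isCompact isCompact_Icc
    have hindInt : IntegrableOn (Set.indicator (A \ S) (fun _ => (1:ℝ))) (Set.Icc 0 T) := by
      apply Integrable.indicator ?_ (hAmeas.diff hSmeas)
      exact integrableOn_const measure_Icc_lt_top.ne
    have hφint : IntegrableOn φ (Set.Icc 0 T) :=
      ((hξInt.const_mul C).add (hηInt.const_mul (2 * C / M))).sub (hindInt.const_mul β)
    have hφg : ∀ x ∈ Set.Ioo (0:ℝ) T, g' x ≤ φ x := by
      intro x _
      rw [hg', hφ]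
      simp only []
      rcases lt_trichotomy (y x) (M / 2) with h | h | h
      · rw [if_neg (by push_neg; exact ⟨le_of_lt h, fun he => absurd he (ne_of_lt h)⟩)]
        rw [Set.indicator_of_notMem (fun hc => absurd hc.1 (not_le.2 h))]
        have h1 : (0:ℝ) ≤ C * ξ x := mul_nonneg hC.le (hξnn x)
        have h2 : (0:ℝ) ≤ 2 * C / M * η x := mul_nonneg hcoef.le (hηnn x)
        linarith
      · rcases lt_trichotomy (y' x) 0 with h' | h' | h'
        · rw [if_neg (by push_neg; exact ⟨h.le, fun _ => le_of_lt h'⟩)]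
          rw [Set.indicator_of_notMem (fun hc => hc.2 ⟨h, ne_of_lt h'⟩)]
          have h1 : (0:ℝ) ≤ C * ξ x := mul_nonneg hC.le (hξnn x)
          have h2 : (0:ℝ) ≤ 2 * C / M * η x := mul_nonneg hcoef.le (hηnn x)
          linarith
        · rw [if_neg (by push_neg; exact ⟨h.le, fun _ => le_of_eq h'⟩)]
          rw [Set.indicator_of_mem (show x ∈ A \ S from
            ⟨h.ge, fun hc => hc.2 h'⟩)]
          have hb := hmid x h
          rw [h', mul_zero, zero_add] at hb
          linarith
        · rw [if_pos (Or.inr ⟨h, h'⟩)]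
          rw [Set.indicator_of_notMem (fun hc => hc.2 ⟨h, ne_of_gt h'⟩)]
          have hb := hmid x h
          have he : y' x / y x = 2 / M * y' x := by
            rw [h]; field_simp
          linarith [hb, he ▸ le_refl (y' x / y x)]
      · rw [if_pos (Or.inl h)]
        rw [Set.indicator_of_mem (show x ∈ A \ S from
          ⟨le_of_lt h, fun hc => absurd hc.1 (ne_of_gt h)⟩)]
        have := boundgt x (le_of_lt h)
        linarith
    have key := intervalIntegral.sub_le_integral_of_hasDeriv_right_of_le (le_of_lt hT) hcont hderiv hφint hφg
    -- split the integral of φ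
    have hξi : IntervalIntegrable ξ volume 0 T :=
      (intervalIntegrable_iff_integrableOn_Icc_of_le hT.le).2 hξInt
    have hηi : IntervalIntegrable η volume 0 T :=
      (intervalIntegrable_iff_integrableOn_Icc_of_le hT.le).2 hηInt
    have hindi : IntervalIntegrable (Set.indicator (A \ S) (fun _ => (1:ℝ))) volume 0 T :=
      (intervalIntegrable_iff_integrableOn_Icc_of_le hT.le).2 hindInt
    have hsplit : (∫ t in (0:ℝ)..T, φ t)
        = C * (∫ t in (0:ℝ)..T, ξ t) + 2 * C / M * (∫ t in (0:ℝ)..T, η t)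
          - β * ∫ t in (0:ℝ)..T, Set.indicator (A \ S) (fun _ => (1:ℝ)) t := by
      rw [hφ]
      rw [intervalIntegral.integral_sub ((hξi.const_mul C).add (hηi.const_mul (2 * C / M)))
        (hindi.const_mul β)]
      rw [intervalIntegral.integral_add (hξi.const_mul C) (hηi.const_mul (2 * C / M))]
      rw [intervalIntegral.integral_const_mul, intervalIntegral.integral_const_mul,
        intervalIntegral.integral_const_mul]
    have hindeq : (∫ t in (0:ℝ)..T, Set.indicator (A \ S) (fun _ => (1:ℝ)) t)
        = ∫ t in (0:ℝ)..T, Set.indicator A (fun _ => (1:ℝ)) t := by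
      apply intervalIntegral.integral_congr_ae
      have hae : ∀ᵐ s : ℝ, s ∉ S := by
        rw [ae_iff]
        simpa using hS0
      filter_upwards [hae] with s hs _
      by_cases hsA : s ∈ A
      · simp [Set.indicator_apply, Set.mem_diff, hsA, hs]
      · simp [Set.indicator_apply, Set.mem_diff, hsA]
    have hz0 : Real.log (max (y 0) (M / 2)) = ζ 0 := rfl
    have hzT : Real.log (max (y T) (M / 2)) = ζ T := rfl
    rw [hz0, hzT]
    rw [hsplit, hindeq] at key
    linarith
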